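/- Let k be a field of characteristic ≠ 2, n ≥ 1, and f ∈ k[x] monic separable of degree 2n+1. Let L = k[x]/(f), let β be the image of x, let c : L → k be the coefficient-of-β^{2n} functional with respect to the basis {1,β,…,β^{2n}}, and define ⟨λ,μ⟩ = c(λμ). Then: (i) ⟨·,·⟩ is a symmetric bilinear form on L which is nondegenerate, and its Gram matrix with respect to the basis {1,β,…,β^{2n}} has determinant exactly (−1)ⁿ; (ii) the multiplication map t(λ) = βλ is self-adjoint, i.e. ⟨βλ,μ⟩ = ⟨λ,βμ⟩ for all λ,μ ∈ L, and its characteristic polynomial equals f(x); (iii) the subspace M = span_k{1,β,…,β^{n−1}} is an n-dimensional totally isotropic subspace for ⟨·,·⟩. -/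

import Mathlib

open Polynomial

private lemma det_antidiag {R : Type*} [CommRing R] :
    ∀ (m : ℕ) (A : Matrix (Fin m) (Fin m) R),
      (∀ i j : Fin m, (i : ℕ) + (j : ℕ) + 1 < m → A i j = 0) →
      (∀ i j : Fin m, (i : ℕ) + (j : ℕ) + 1 = m → A i j = 1) →
      A.det = (-1 : R) ^ (m.choose 2)
  | 0, A, _, _ => by simp [Matrix.det_fin_zero]
  | m + 1, A, h0, h1 => by
    rw [Matrix.det_succ_row_zero, Finset.sum_eq_single (Fin.last m)]
    · have hminor : (A.submatrix Fin.succ (Fin.last m).succAbove).det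
          = (-1 : R) ^ (m.choose 2) := by
        apply det_antidiag
        · intro i j hij
          simp only [Matrix.submatrix_apply, Fin.succAbove_last]
          exact h0 _ _ (by simp only [Fin.val_succ, Fin.coe_castSucc]; omega)
        · intro i j hij
          simp only [Matrix.submatrix_apply, Fin.succAbove_last]
          exact h1 _ _ (by simp only [Fin.val_succ, Fin.coe_castSucc]; omega)
      rw [hminor, h1 0 (Fin.last m) (by simp), mul_one, Fin.val_last, ← pow_add]
      congr 1
      rw [Nat.choose_succ_succ, Nat.choose_one_right]
    · intro j _ hj
      have hjm : (j : ℕ) < m := by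
        rcases Nat.lt_or_ge (j : ℕ) m with h | h
        · exact h
        · exact absurd (Fin.ext (by simp only [Fin.val_last]; omega)) hj
      rw [h0 0 j (by simp only [Fin.val_zero]; omega), mul_zero, zero_mul]
    · intro h
      exact absurd (Finset.mem_univ _) h

/-- Let `k` be a field of characteristic `≠ 2`, `n ≥ 1`, and `f ∈ k[x]` monic separable of
degree `2n+1`.  Let `L = k[x]/(f)`, `β` the image of `x`, `c : L → k` the
coefficient-of-`β^{2n}` functional with respect to the basis `{1, β, …, β^{2n}}`, and
`⟨λ,μ⟩ = c(λμ)`.  Then: (i) `⟨·,·⟩` is symmetric and nondegenerate, and its Gram matrix in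
the basis `{1, β, …, β^{2n}}` has determinant `(-1)ⁿ`; (ii) multiplication by `β` is
self-adjoint, with characteristic polynomial `f`; (iii) the span of `1, β, …, β^{n-1}` is
an `n`-dimensional totally isotropic subspace. -/
theorem symmetric_form_on_adjoinRoot {k : Type*} [Field k] (hchar : (2 : k) ≠ 0)
    (n : ℕ) (hn : 1 ≤ n)
    (f : k[X]) (hm : f.Monic) (hdeg : f.natDegree = 2 * n + 1) (hsep : f.Separable)
    (c : AdjoinRoot f →ₗ[k] k)
    (hc : ∀ i : ℕ, i ≤ 2 * n → c (AdjoinRoot.root f ^ i) = if i = 2 * n then 1 else 0)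
    (B : AdjoinRoot f → AdjoinRoot f → k)
    (hB : ∀ lam mu : AdjoinRoot f, B lam mu = c (lam * mu)) :
    -- (i) symmetric, nondegenerate, Gram determinant `(-1)ⁿ`
    (∀ lam mu : AdjoinRoot f, B lam mu = B mu lam) ∧
    (∀ lam : AdjoinRoot f, (∀ mu : AdjoinRoot f, B lam mu = 0) → lam = 0) ∧
    (Matrix.det (Matrix.of fun i j : Fin (2 * n + 1) =>
        B (AdjoinRoot.root f ^ (i : ℕ)) (AdjoinRoot.root f ^ (j : ℕ))) = (-1 : k) ^ n) ∧
    -- (ii) multiplication by `β` is self-adjoint with characteristic polynomial `f`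
    (∀ lam mu : AdjoinRoot f,
      B (AdjoinRoot.root f * lam) mu = B lam (AdjoinRoot.root f * mu)) ∧
    (∀ b : Module.Basis (Fin (2 * n + 1)) k (AdjoinRoot f),
      haveI : Module.Finite k (AdjoinRoot f) := Module.Finite.of_basis b
      LinearMap.charpoly (LinearMap.mulLeft k (AdjoinRoot.root f)) = f) ∧
    -- (iii) the span of `1, β, …, β^{n-1}` is `n`-dimensional and totally isotropic
    (Module.finrank k
        (Submodule.span k (Set.range fun i : Fin n => AdjoinRoot.root f ^ (i : ℕ))) = n ∧
      ∀ lam ∈ Submodule.span k (Set.range fun i : Fin n => AdjoinRoot.root f ^ (i : ℕ)),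
      ∀ mu ∈ Submodule.span k (Set.range fun i : Fin n => AdjoinRoot.root f ^ (i : ℕ)),
        B lam mu = 0) := by
  set β := AdjoinRoot.root f with hβ
  -- the power basis
  set pb := AdjoinRoot.powerBasis' hm with hpb
  have hdim : pb.dim = 2 * n + 1 := by
    rw [hpb, AdjoinRoot.powerBasis'_dim, hdeg]
  set b0 : Module.Basis (Fin (2 * n + 1)) k (AdjoinRoot f) := pb.basis.reindex (finCongr hdim)
    with hb0def
  have hb0 : ∀ i : Fin (2 * n + 1), b0 i = β ^ (i : ℕ) := by
    intro i
    rw [hb0def, Module.Basis.reindex_apply, PowerBasis.coe_basis]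
    simp [hpb, hβ]
  refine ⟨?_, ?_, ?_, ?_, ?_, ?_, ?_⟩
  · -- symmetry
    intro lam mu
    rw [hB, hB, mul_comm]
  · -- nondegeneracy
    intro lam hlam
    have key0 : ∀ (j : Fin (2 * n + 1)) (e : ℕ), (j : ℕ) + e = 2 * n →
        (∀ i : Fin (2 * n + 1), (j : ℕ) < (i : ℕ) → b0.repr lam i = 0) →
        b0.repr lam j = 0 := by
      intro j e hje hgt
      have hexp : c (lam * β ^ e)
          = ∑ i : Fin (2 * n + 1), b0.repr lam i * c (β ^ ((i : ℕ) + e)) := by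
        conv_lhs => rw [← b0.sum_repr lam]
        rw [Finset.sum_mul, map_sum]
        refine Finset.sum_congr rfl fun i _ => ?_
        rw [smul_mul_assoc, map_smul, smul_eq_mul, hb0 i, ← pow_add]
      have h0 : c (lam * β ^ e) = 0 := by rw [← hB]; exact hlam _
      rw [Finset.sum_eq_single j] at hexp
      · rw [hje, hc _ le_rfl, if_pos rfl, mul_one, h0] at hexp
        exact hexp.symm
      · intro i _ hij
        have hine : (i : ℕ) ≠ (j : ℕ) := fun h => hij (Fin.ext h)
        rcases Nat.lt_or_ge (i : ℕ) (j : ℕ) with h | h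
        · rw [hc _ (by omega), if_neg (by omega), mul_zero]
        · rw [hgt i (by omega), zero_mul]
      · intro h
        exact absurd (Finset.mem_univ _) h
    have hrepr : ∀ m : ℕ, ∀ j : Fin (2 * n + 1), 2 * n ≤ (j : ℕ) + m →
        b0.repr lam j = 0 := by
      intro m
      induction m with
      | zero =>
        intro j hj
        have hj2 := j.isLt
        exact key0 j 0 (by omega) fun i hi => absurd i.isLt (by omega)
      | succ m ih =>
        intro j hj
        rcases le_or_gt (2 * n) ((j : ℕ) + m) with h | h
        · exact ih j h
        · exact key0 j (m + 1) (by omega) (fun i hi => ih i (by omega))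
    have : b0.repr lam = 0 := by
      ext j
      rw [hrepr (2 * n) j (by omega)]
      rfl
    exact b0.repr.map_eq_zero_iff.mp this
  · -- Gram determinant
    have hdet := det_antidiag (2 * n + 1)
      (Matrix.of fun i j : Fin (2 * n + 1) => B (β ^ (i : ℕ)) (β ^ (j : ℕ)))
      (fun i j hij => by
        simp only [Matrix.of_apply]
        rw [hB, ← pow_add, hc _ (by omega), if_neg (by omega)])
      (fun i j hij => by
        simp only [Matrix.of_apply]
        rw [hB, ← pow_add, hc _ (by omega), if_pos (by omega)])
    rw [hdet]
    have he : (2 * n + 1).choose 2 = n * (2 * n + 1) := by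
      rw [Nat.choose_two_right]
      have h1 : (2 * n + 1) * (2 * n + 1 - 1) = n * (2 * n + 1) * 2 := by
        have : 2 * n + 1 - 1 = 2 * n := by omega
        rw [this]; ring
      rw [h1, Nat.mul_div_cancel _ (by norm_num)]
    rw [he]
    rcases Nat.even_or_odd n with hev | hod
    · rw [(hev.mul_right _).neg_one_pow, hev.neg_one_pow]
    · rw [(hod.mul (odd_two_mul_add_one n)).neg_one_pow, hod.neg_one_pow]
  · -- self-adjointness
    intro lam mu
    rw [hB, hB]
    ring_nf
  · -- characteristic polynomial
    intro b
    haveI : Module.Finite k (AdjoinRoot f) := Module.Finite.of_basis b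
    set φ := LinearMap.mulLeft k β with hφ
    have hfr : Module.finrank k (AdjoinRoot f) = 2 * n + 1 := by
      rw [Module.finrank_eq_card_basis b, Fintype.card_fin]
    have hmono : φ.charpoly.Monic := LinearMap.charpoly_monic φ
    have hndeg : φ.charpoly.natDegree = 2 * n + 1 := by
      rw [LinearMap.charpoly_natDegree, hfr]
    have h4 : aeval β φ.charpoly = 0 := by
      have h3 : aeval φ φ.charpoly = 0 := LinearMap.aeval_self_charpoly φ
      have hkey : (Algebra.lmul k (AdjoinRoot f)) β = φ := by
        ext x; rfl
      have h5 := aeval_algHom_apply (Algebra.lmul k (AdjoinRoot f)) β φ.charpoly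
      rw [hkey, h3] at h5
      have h6 := congrArg (fun ψ : Module.End k (AdjoinRoot f) => ψ 1) h5.symm
      simpa using h6
    have hdvd : f ∣ φ.charpoly := by
      rw [← AdjoinRoot.mk_eq_zero, ← AdjoinRoot.aeval_eq]
      exact h4
    obtain ⟨q, hq⟩ := hdvd
    have hq0 : q ≠ 0 := by
      rintro rfl
      rw [mul_zero] at hq
      exact hmono.ne_zero hq
    have hqdeg : q.natDegree = 0 := by
      have := hndeg
      rw [hq, Polynomial.natDegree_mul hm.ne_zero hq0, hdeg] at this
      omega
    have hqlead : q.coeff 0 = 1 := by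
      have h7 : φ.charpoly.leadingCoeff = 1 := hmono
      rw [hq, Polynomial.leadingCoeff_mul, hm.leadingCoeff, one_mul] at h7
      rwa [Polynomial.leadingCoeff, hqdeg] at h7
    have hq1 : q = 1 := by
      rw [Polynomial.eq_C_of_natDegree_eq_zero hqdeg, hqlead, map_one]
    rw [hq, hq1, mul_one]
  · -- finrank of the span
    have hle : n ≤ 2 * n + 1 := by omega
    have heq : (fun i : Fin n => β ^ (i : ℕ)) = ⇑b0 ∘ Fin.castLE hle := by
      funext i
      rw [Function.comp_apply, hb0]
      rfl
    have hli : LinearIndependent k (fun i : Fin n => β ^ (i : ℕ)) := by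
      rw [heq]
      exact b0.linearIndependent.comp _ (Fin.castLE_injective hle)
    rw [finrank_span_eq_card hli, Fintype.card_fin]
  · -- isotropy
    intro lam hlam mu hmu
    rw [hB]
    refine Submodule.span_induction₂ (p := fun x y _ _ => c (x * y) = 0)
      (fun x y hx hy => ?_)
      (fun y _ => show c (0 * y) = 0 by rw [zero_mul, map_zero])
      (fun x _ => show c (x * 0) = 0 by rw [mul_zero, map_zero])
      (fun x y z _ _ _ h1 h2 => show c ((x + y) * z) = 0 by
        rw [add_mul, map_add]
        rw [show c (x * z) = 0 from h1, show c (y * z) = 0 from h2, add_zero])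
      (fun x y z _ _ _ h1 h2 => show c (x * (y + z)) = 0 by
        rw [mul_add, map_add]
        rw [show c (x * y) = 0 from h1, show c (x * z) = 0 from h2, add_zero])
      (fun r x y _ _ h => show c ((r • x) * y) = 0 by
        rw [smul_mul_assoc, map_smul, show c (x * y) = 0 from h, smul_zero])
      (fun r x y _ _ h => show c (x * (r • y)) = 0 by
        rw [mul_smul_comm, map_smul, show c (x * y) = 0 from h, smul_zero])
      hlam hmu
    obtain ⟨i, rfl⟩ := hx
    obtain ⟨j, rfl⟩ := hy
    show c (β ^ (i : ℕ) * β ^ (j : ℕ)) = 0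
    rw [← pow_add, hc _ (by have := i.isLt; have := j.isLt; omega),
      if_neg (by have := i.isLt; have := j.isLt; omega)]
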